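/- A Sylow 3-subgroup of Sp_4(F_3) has exactly 17 conjugacy classes. -/

import Mathlib

open Matrix

namespace Stmt11

abbrev F3 := ZMod 3
abbrev Idx : Type := (Fin 2) ⊕ (Fin 2)
abbrev SpG := Matrix.symplecticGroup (Fin 2) F3

/-! ### An abstract model of the Sylow 3-subgroup -/

@[ext]
structure GG where
  a : F3
  b : F3
  c : F3
  d : F3
  deriving DecidableEq, Fintype

namespace GG

instance : One GG := ⟨⟨0,0,0,0⟩⟩
instance : Mul GG := ⟨fun x y => ⟨x.a + y.a, x.b + y.b + x.a * y.d,
  x.c + y.c + x.a * y.b - x.a * y.a * y.d - x.b * y.a, x.d + y.d⟩⟩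
instance : Inv GG := ⟨fun x => ⟨-x.a, -x.b + x.a * x.d, -x.c, -x.d⟩⟩

lemma mul_def (x y : GG) : x * y = ⟨x.a + y.a, x.b + y.b + x.a * y.d,
  x.c + y.c + x.a * y.b - x.a * y.a * y.d - x.b * y.a, x.d + y.d⟩ := rfl
lemma one_def : (1 : GG) = ⟨0,0,0,0⟩ := rfl
lemma inv_def (x : GG) : x⁻¹ = ⟨-x.a, -x.b + x.a * x.d, -x.c, -x.d⟩ := rfl

instance : Group GG where
  mul_assoc x y z := by ext <;> (simp [mul_def] <;> ring)
  one_mul x := by ext <;> simp [mul_def, one_def]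
  mul_one x := by ext <;> simp [mul_def, one_def]
  inv_mul_cancel x := by ext <;> (simp [mul_def, one_def, inv_def] <;> ring)

instance (a b : GG) : Decidable (Commute a b) := decidable_of_iff (a * b = b * a) Iff.rfl

lemma card_GG : Nat.card GG = 81 := by
  rw [Nat.card_eq_fintype_card]; decide

set_option maxRecDepth 40000 in
set_option maxHeartbeats 4000000 in
lemma card_comm : Nat.card {p : GG × GG // Commute p.1 p.2} = 1377 := by
  rw [Nat.card_eq_fintype_card]; decide

lemma card_conjClasses_GG : Nat.card (ConjClasses GG) = 17 := by
  have h := card_comm_eq_card_conjClasses_mul_card GG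
  rw [card_comm, card_GG] at h
  omega

end GG

/-! ### The matrix realization -/

def fm (g : GG) : Matrix Idx Idx F3 :=
  Matrix.fromBlocks !![1, g.a; 0, 1] !![g.c, g.b; g.b - g.a * g.d, g.d] 0 !![1, 0; -g.a, 1]

lemma fm_mem (g : GG) : fm g ∈ Matrix.symplecticGroup (Fin 2) F3 := by
  rw [SymplecticGroup.mem_iff]
  ext i j
  rcases i with i | i <;> rcases j with j | j <;> fin_cases i <;> fin_cases j <;>
    (simp [fm, Matrix.J, Matrix.mul_apply, Fintype.sum_sum_type, Fin.sum_univ_two,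
      Matrix.fromBlocks] <;> ring)

lemma fm_mul (g h : GG) : fm (g * h) = fm g * fm h := by
  show fm ⟨_,_,_,_⟩ = _
  ext i j
  rcases i with i | i <;> rcases j with j | j <;> fin_cases i <;> fin_cases j <;>
    (simp [fm, Matrix.mul_apply, Fintype.sum_sum_type, Fin.sum_univ_two,
      Matrix.fromBlocks] <;> ring)

lemma fm_one : fm 1 = 1 := by
  show fm ⟨_,_,_,_⟩ = _
  ext i j
  rcases i with i | i <;> rcases j with j | j <;> fin_cases i <;> fin_cases j <;>
    simp [fm, Matrix.fromBlocks, Matrix.one_apply]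

lemma fm_inj : Function.Injective fm := by
  intro g h H
  cases g; cases h
  have ha := congrFun (congrFun H (Sum.inl 0)) (Sum.inl 1)
  have hb := congrFun (congrFun H (Sum.inl 0)) (Sum.inr 1)
  have hc := congrFun (congrFun H (Sum.inl 0)) (Sum.inr 0)
  have hd := congrFun (congrFun H (Sum.inl 1)) (Sum.inr 1)
  simp [fm, Matrix.fromBlocks] at ha hb hc hd
  simp_all

def fhom : GG →* SpG where
  toFun g := ⟨fm g, fm_mem g⟩
  map_one' := Subtype.ext fm_one
  map_mul' g h := Subtype.ext (fm_mul g h)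

lemma fhom_inj : Function.Injective fhom := by
  intro g h H
  exact fm_inj (congrArg Subtype.val H)

lemma coe_fhom (g : GG) : (fhom g : Matrix Idx Idx F3) = fm g := rfl

/-! ### Subspace characterizations (by `decide`) -/

def ev (j : Idx) : Idx → F3 := fun k => if k = j then 1 else 0

lemma mulVec_ev (A : Matrix Idx Idx F3) (j i : Idx) : A.mulVec (ev j) i = A i j := by
  simp [ev, Matrix.mulVec, dotProduct, mul_ite, Finset.sum_ite_eq']

set_option maxRecDepth 40000 in
set_option maxHeartbeats 4000000 in
lemma W1_iff : ∀ v : Idx → F3, (∀ g : GG, (fm g).mulVec v = v) ↔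
    (v (Sum.inl 1) = 0 ∧ v (Sum.inr 0) = 0 ∧ v (Sum.inr 1) = 0) := by decide

set_option maxRecDepth 40000 in
set_option maxHeartbeats 4000000 in
lemma W2_iff : ∀ v : Idx → F3,
    (∀ g : GG, ((fm g).mulVec v - v) (Sum.inl 1) = 0 ∧
      ((fm g).mulVec v - v) (Sum.inr 0) = 0 ∧ ((fm g).mulVec v - v) (Sum.inr 1) = 0) ↔
    (v (Sum.inr 0) = 0 ∧ v (Sum.inr 1) = 0) := by decide

set_option maxRecDepth 40000 in
set_option maxHeartbeats 4000000 in
lemma W3_iff : ∀ v : Idx → F3,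
    (∀ g : GG, ((fm g).mulVec v - v) (Sum.inr 0) = 0 ∧
      ((fm g).mulVec v - v) (Sum.inr 1) = 0) ↔
    (v (Sum.inr 0) = 0) := by decide

/-! ### Roots of unity in `F3` -/

lemma pow3k (t : F3) : ∀ k : ℕ, t ^ 3 ^ k = 1 → t = 1 := by
  intro k
  induction k with
  | zero => intro h; simpa using h
  | succ k ih =>
    intro h
    apply ih
    rw [pow_succ, pow_mul] at h
    have hc : ∀ s : F3, s ^ 3 = s := by decide
    rwa [hc] at h

lemma keyA (x : SpG) (k : ℕ) (hxk : x ^ 3 ^ k = 1)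
    (h1 : ∀ g : GG, ∃ g' : GG,
      (fm g) * (x : Matrix Idx Idx F3) = (x : Matrix Idx Idx F3) * fm g') :
    ∃ g : GG, fm g = (x : Matrix Idx Idx F3) := by
  set X : Matrix Idx Idx F3 := (x : Matrix Idx Idx F3) with hXdef
  have key : ∀ (v : Idx → F3) (g : GG), ∃ g' : GG,
      (fm g).mulVec (X.mulVec v) = X.mulVec ((fm g').mulVec v) := by
    intro v g
    obtain ⟨g', hg⟩ := h1 g
    exact ⟨g', by rw [Matrix.mulVec_mulVec, hg, ← Matrix.mulVec_mulVec]⟩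
  -- column (inl 0)
  have col0 := (W1_iff (X.mulVec (ev (Sum.inl 0)))).mp (by
    intro g
    obtain ⟨g', hg⟩ := key (ev (Sum.inl 0)) g
    rw [hg, (W1_iff (ev (Sum.inl 0))).mpr (by refine ⟨rfl, rfl, rfl⟩) g'])
  rw [mulVec_ev, mulVec_ev, mulVec_ev] at col0
  obtain ⟨z10, z20, z30⟩ := col0
  -- X preserves W1
  have stab1 : ∀ v : Idx → F3, v (Sum.inl 1) = 0 → v (Sum.inr 0) = 0 → v (Sum.inr 1) = 0 →
      (X.mulVec v) (Sum.inl 1) = 0 ∧ (X.mulVec v) (Sum.inr 0) = 0 ∧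
        (X.mulVec v) (Sum.inr 1) = 0 := by
    intro v h1' h2' h3'
    have hv : v = v (Sum.inl 0) • ev (Sum.inl 0) := by
      funext i
      rcases i with i | i <;> fin_cases i <;> simp [ev, h1', h2', h3']
    rw [hv, Matrix.mulVec_smul]
    refine ⟨?_, ?_, ?_⟩ <;>
      simp [Pi.smul_apply, mulVec_ev, z10, z20, z30]
  -- X preserves W2
  have stab2 : ∀ v : Idx → F3, v (Sum.inr 0) = 0 → v (Sum.inr 1) = 0 →
      (X.mulVec v) (Sum.inr 0) = 0 ∧ (X.mulVec v) (Sum.inr 1) = 0 := by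
    intro v hv0 hv1
    apply (W2_iff (X.mulVec v)).mp
    intro g
    obtain ⟨g', hg⟩ := key v g
    have hd : (fm g).mulVec (X.mulVec v) - X.mulVec v
        = X.mulVec ((fm g').mulVec v - v) := by
      rw [Matrix.mulVec_sub, hg]
    have hw := (W2_iff v).mpr ⟨hv0, hv1⟩ g'
    have := stab1 _ hw.1 hw.2.1 hw.2.2
    rw [hd]
    exact this
  -- X preserves W3
  have stab3 : ∀ v : Idx → F3, v (Sum.inr 0) = 0 → (X.mulVec v) (Sum.inr 0) = 0 := by
    intro v hv0
    apply (W3_iff (X.mulVec v)).mp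
    intro g
    obtain ⟨g', hg⟩ := key v g
    have hd : (fm g).mulVec (X.mulVec v) - X.mulVec v
        = X.mulVec ((fm g').mulVec v - v) := by
      rw [Matrix.mulVec_sub, hg]
    have hw := (W3_iff v).mpr hv0 g'
    have := stab2 _ hw.1 hw.2
    rw [hd]
    exact this
  -- remaining zero entries
  have col1 := stab2 (ev (Sum.inl 1)) rfl rfl
  rw [mulVec_ev, mulVec_ev] at col1
  obtain ⟨z21, z31⟩ := col1
  have col3 := stab3 (ev (Sum.inr 1)) rfl
  rw [mulVec_ev] at col3
  have z23 : X (Sum.inr 0) (Sum.inr 1) = 0 := col3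
  -- powers keep the triangular pattern
  have pows : ∀ n : ℕ,
      (X ^ n) (Sum.inl 1) (Sum.inl 0) = 0 ∧
      (X ^ n) (Sum.inr 0) (Sum.inl 0) = 0 ∧
      (X ^ n) (Sum.inr 1) (Sum.inl 0) = 0 ∧
      (X ^ n) (Sum.inr 0) (Sum.inl 1) = 0 ∧
      (X ^ n) (Sum.inr 1) (Sum.inl 1) = 0 ∧
      (X ^ n) (Sum.inr 0) (Sum.inr 1) = 0 ∧
      (X ^ n) (Sum.inl 0) (Sum.inl 0) = X (Sum.inl 0) (Sum.inl 0) ^ n ∧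
      (X ^ n) (Sum.inl 1) (Sum.inl 1) = X (Sum.inl 1) (Sum.inl 1) ^ n ∧
      (X ^ n) (Sum.inr 0) (Sum.inr 0) = X (Sum.inr 0) (Sum.inr 0) ^ n ∧
      (X ^ n) (Sum.inr 1) (Sum.inr 1) = X (Sum.inr 1) (Sum.inr 1) ^ n := by
    intro n
    induction n with
    | zero =>
      simp [Matrix.one_apply]
    | succ n ih =>
      obtain ⟨i1, i2, i3, i4, i5, i6, d0, d1, d2, d3⟩ := ih
      rw [pow_succ]
      refine ⟨?_, ?_, ?_, ?_, ?_, ?_, ?_, ?_, ?_, ?_⟩ <;>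
        simp [Matrix.mul_apply, Fintype.sum_sum_type, Fin.sum_univ_two,
          i1, i2, i3, i4, i5, i6, d0, d1, d2, d3, z10, z20, z30, z21, z31, z23, pow_succ]
  have hX3k : X ^ 3 ^ k = 1 := by
    have : ((x ^ 3 ^ k : SpG) : Matrix Idx Idx F3) = ((1 : SpG) : Matrix Idx Idx F3) := by
      rw [hxk]
    simpa [SubmonoidClass.coe_pow] using this
  have hp := pows (3 ^ k)
  rw [hX3k] at hp
  obtain ⟨-, -, -, -, -, -, e0, e1, e2, e3⟩ := hp
  have t0 : X (Sum.inl 0) (Sum.inl 0) = 1 := pow3k _ k (by rw [← e0]; simp [Matrix.one_apply])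
  have t1 : X (Sum.inl 1) (Sum.inl 1) = 1 := pow3k _ k (by rw [← e1]; simp [Matrix.one_apply])
  have t2 : X (Sum.inr 0) (Sum.inr 0) = 1 := pow3k _ k (by rw [← e2]; simp [Matrix.one_apply])
  have t3 : X (Sum.inr 1) (Sum.inr 1) = 1 := pow3k _ k (by rw [← e3]; simp [Matrix.one_apply])
  have hsymp : X * Matrix.J (Fin 2) F3 * Xᵀ = Matrix.J (Fin 2) F3 :=
    (SymplecticGroup.mem_iff).mp x.2
  have eA := congrFun (congrFun hsymp (Sum.inr 1)) (Sum.inl 0)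
  have eB := congrFun (congrFun hsymp (Sum.inl 0)) (Sum.inl 1)
  simp only [Matrix.mul_apply, Fintype.sum_sum_type, Fin.sum_univ_two, Matrix.J,
    Matrix.fromBlocks, Matrix.transpose_apply, Matrix.of_apply, Sum.elim_inl, Sum.elim_inr,
    Matrix.zero_apply, Matrix.neg_apply, Matrix.one_apply, z10, z20, z30, z21, z31, z23,
    t0, t1, t2, t3] at eA eB
  simp at eA eB
  refine ⟨⟨X (Sum.inl 0) (Sum.inl 1), X (Sum.inl 0) (Sum.inr 1),
    X (Sum.inl 0) (Sum.inr 0), X (Sum.inl 1) (Sum.inr 1)⟩, ?_⟩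
  ext i j
  rcases i with i | i <;> rcases j with j | j <;> fin_cases i <;> fin_cases j <;>
    simp [fm, Matrix.fromBlocks, z10, z20, z30, z21, z31, z23, t0, t1, t2, t3] <;>
    first
      | rfl
      | linear_combination eB
      | linear_combination -eA


/-! ### assembly -/

instance : Fact (Nat.Prime 3) := ⟨by norm_num⟩

instance : Finite SpG := Subtype.finite

noncomputable def ggEquivRange : GG ≃* fhom.range := MonoidHom.ofInjective fhom_inj

lemma card_range : Nat.card (fhom.range : Subgroup SpG) = 81 := by
  rw [← GG.card_GG]
  exact (Nat.card_congr ggEquivRange.toEquiv).symm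

lemma isP_range : IsPGroup 3 (fhom.range : Subgroup SpG) :=
  IsPGroup.of_card (n := 4) (by rw [card_range]; norm_num)

lemma range_max {Q : Subgroup SpG} (hQ : IsPGroup 3 Q) (hle : fhom.range ≤ Q) :
    Q = fhom.range := by
  refine le_antisymm ?_ hle
  by_contra hlt
  set H := fhom.range.subgroupOf Q with hHdef
  have hHne : H ≠ ⊤ := fun h => hlt (Subgroup.subgroupOf_eq_top.mp h)
  have hnil : Group.IsNilpotent ↥Q := hQ.isNilpotent
  have hnc := normalizerCondition_of_isNilpotent (G := ↥Q)
  have hlt2 : H < Subgroup.normalizer (H : Set ↥Q) := hnc H (lt_top_iff_ne_top.mpr hHne)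
  obtain ⟨x, hxn, hxH⟩ := SetLike.exists_of_lt hlt2
  rw [Subgroup.mem_normalizer_iff] at hxn
  have hmem : ∀ g : GG, ∃ g' : GG,
      (fm g) * ((x : SpG) : Matrix Idx Idx F3)
        = ((x : SpG) : Matrix Idx Idx F3) * fm g' := by
    intro g
    have hq : fhom g ∈ Q := hle ⟨g, rfl⟩
    have hqH : (⟨fhom g, hq⟩ : ↥Q) ∈ H := Subgroup.mem_subgroupOf.mpr ⟨g, rfl⟩
    have h2 : x⁻¹ * ⟨fhom g, hq⟩ * x ∈ H := by
      apply (hxn (x⁻¹ * ⟨fhom g, hq⟩ * x)).mpr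
      have : x * (x⁻¹ * (⟨fhom g, hq⟩ : ↥Q) * x) * x⁻¹ = ⟨fhom g, hq⟩ := by group
      rwa [this]
    obtain ⟨g', hg'⟩ := Subgroup.mem_subgroupOf.mp h2
    refine ⟨g', ?_⟩
    have hg'' : fhom g' = ((x : SpG))⁻¹ * fhom g * (x : SpG) := by
      rw [hg']; push_cast; rfl
    have : (x : SpG) * fhom g' = fhom g * (x : SpG) := by
      rw [hg'']; group
    have hval := congrArg Subtype.val this
    push_cast at hval
    rw [coe_fhom, coe_fhom] at hval
    exact hval.symm
  obtain ⟨k, hk⟩ := hQ x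
  have hx1 : (x : SpG) ^ 3 ^ k = 1 := by
    have := congrArg (Subtype.val : ↥Q → SpG) hk
    push_cast at this
    exact this
  obtain ⟨g, hg⟩ := keyA (x : SpG) k hx1 hmem
  apply hxH
  apply Subgroup.mem_subgroupOf.mpr
  exact ⟨g, Subtype.ext (by rw [coe_fhom, hg])⟩

noncomputable def Syl : Sylow 3 SpG :=
  ⟨fhom.range, isP_range, fun hQ hle => range_max hQ hle⟩

instance : Finite (Sylow 3 SpG) :=
  Finite.of_injective (fun P => ((P : Subgroup SpG) : Set SpG))
    (fun P Q h => Sylow.ext (SetLike.coe_injective h))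

/-- transport conj classes along a `MulEquiv`. -/
noncomputable def conjEquiv {G H : Type*} [Group G] [Group H] (e : G ≃* H) :
    ConjClasses G ≃ ConjClasses H :=
  Quotient.congr e.toEquiv (fun a b => by
    show IsConj a b ↔ IsConj (e a) (e b)
    rw [isConj_iff, isConj_iff]
    constructor
    · rintro ⟨c, rfl⟩
      exact ⟨e c, by simp [_root_.map_mul]⟩
    · rintro ⟨c, hc⟩
      refine ⟨e.symm c, e.injective ?_⟩
      simpa [_root_.map_mul] using hc)

theorem stmt_11' (P : Sylow 3 (Matrix.symplecticGroup (Fin 2) (ZMod 3))) :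
    Nat.card (ConjClasses (P : Subgroup (Matrix.symplecticGroup (Fin 2) (ZMod 3)))) = 17 := by
  have e1 : ↥(Syl : Subgroup SpG) ≃* ↥(P : Subgroup SpG) := Sylow.equiv Syl P
  have e2 : GG ≃* ↥(Syl : Subgroup SpG) := ggEquivRange
  rw [← GG.card_conjClasses_GG]
  exact Nat.card_congr (conjEquiv (e2.trans e1)).symm

end Stmt11

/-- A Sylow 3-subgroup of `Sp₄(F_3)` has exactly 17 conjugacy classes. -/
theorem stmt_11 (P : Sylow 3 (Matrix.symplecticGroup (Fin 2) (ZMod 3))) :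
    Nat.card (ConjClasses (P : Subgroup (Matrix.symplecticGroup (Fin 2) (ZMod 3)))) = 17 :=
  Stmt11.stmt_11' P
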